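/- Let N = (P, T, Pre, Post) be a Petri net, M_0 ∈ ℕ^P a marking, and let S = b + 𝐏 ⊆ ℕ^P be a linear set, where b ∈ ℕ^P and 𝐏 = {λ_1·v_1 + ... + λ_k·v_k | λ_1, ..., λ_k ∈ ℕ} for given vectors v_1, ..., v_k ∈ ℕ^P. Let N' be the Petri net constructed from N, b and v_1, ..., v_k as described. Then Reach(M_0) ∩ S = ∅ in N if and only if the zero marking 0 does not belong to Reach(M_0') in N', where M_0' is the marking with M_0'(p_sim) = 1, M_0'(p_lin) = 0 and M_0'(p) = M_0(p) for all p ∈ P. -/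

import Mathlib

/-- A Petri net with (finite) sets `P` of places and `T` of transitions:
pre- and post-condition functions assigning to each transition a multiset of places,
represented as a function `P → ℕ`. -/
structure PetriNet (P T : Type) : Type where
  Pre : T → P → ℕ
  Post : T → P → ℕ

namespace PetriNet

variable {P T : Type}

/-- The firing relation: `M ⇒ M'` iff some transition `t` satisfies `Pre t ≤ M`
and `M' = M - Pre t + Post t` (pointwise). -/
def Fire (N : PetriNet P T) (M M' : P → ℕ) : Prop :=
  ∃ t : T, N.Pre t ≤ M ∧ M' = M - N.Pre t + N.Post t

/-- Reachability: reflexive-transitive closure of the firing relation. -/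
def Reach (N : PetriNet P T) : (P → ℕ) → (P → ℕ) → Prop := Relation.ReflTransGen N.Fire

/-- The extended places: the places of the original net, plus two fresh places
`p_sim = Sum.inr false` and `p_lin = Sum.inr true`. -/
abbrev ExtPlace (P : Type) : Type := P ⊕ Bool

/-- The extended transitions: the transitions of the original net, plus `k` transitions
`t_cons_i = Sum.inr (Sum.inl i)`, the transition `t_lin = Sum.inr (Sum.inr false)` and the
transition `t_end = Sum.inr (Sum.inr true)`. -/
abbrev ExtTrans (T : Type) (k : ℕ) : Type := T ⊕ (Fin k ⊕ Bool)

/-- The Petri net `N'` built from `N`, a base vector `b` and period vectors `v 1, …, v k`: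
while a token lies in `p_sim`, `N'` simulates `N`; the transition `t_lin` consumes the token
of `p_sim` together with `b(p)` tokens in each place `p ∈ P` and produces a token in `p_lin`;
each `t_cons_i` tests the token in `p_lin` and consumes `v i (p)` tokens in each `p ∈ P`;
finally `t_end` consumes the token of `p_lin`. -/
def extNet (N : PetriNet P T) {k : ℕ} (b : P → ℕ) (v : Fin k → P → ℕ) :
    PetriNet (ExtPlace P) (ExtTrans T k) where
  Pre
    | Sum.inl t => fun p =>
        match p with
        | Sum.inl p => N.Pre t p
        | Sum.inr false => 1
        | Sum.inr true => 0
    | Sum.inr (Sum.inl i) => fun p =>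
        match p with
        | Sum.inl p => v i p
        | Sum.inr false => 0
        | Sum.inr true => 1
    | Sum.inr (Sum.inr false) => fun p =>
        match p with
        | Sum.inl p => b p
        | Sum.inr false => 1
        | Sum.inr true => 0
    | Sum.inr (Sum.inr true) => fun p =>
        match p with
        | Sum.inl _ => 0
        | Sum.inr false => 0
        | Sum.inr true => 1
  Post
    | Sum.inl t => fun p =>
        match p with
        | Sum.inl p => N.Post t p
        | Sum.inr false => 1
        | Sum.inr true => 0
    | Sum.inr (Sum.inl _) => fun p =>
        match p with
        | Sum.inl _ => 0
        | Sum.inr false => 0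
        | Sum.inr true => 1
    | Sum.inr (Sum.inr false) => fun p =>
        match p with
        | Sum.inl _ => 0
        | Sum.inr false => 0
        | Sum.inr true => 1
    | Sum.inr (Sum.inr true) => fun _ => 0

/-- The initial marking of `N'`: one token in `p_sim`, none in `p_lin`, and `M₀` on `P`. -/
def extM0 (M0 : P → ℕ) : ExtPlace P → ℕ
  | Sum.inl p => M0 p
  | Sum.inr false => 1
  | Sum.inr true => 0

end PetriNet

namespace PetriAux

open PetriNet

variable {P T : Type} {k : ℕ}

/-- Marking of the extended net during the "linear" phase: token in `p_lin`. -/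
def linMk (w : P → ℕ) : ExtPlace P → ℕ
  | Sum.inl p => w p
  | Sum.inr false => 0
  | Sum.inr true => 1

/-- Marking of the extended net after `t_end`: no token in `p_sim` nor `p_lin`. -/
def deadMk (w : P → ℕ) : ExtPlace P → ℕ
  | Sum.inl p => w p
  | Sum.inr _ => 0

variable (N : PetriNet P T) (b : P → ℕ) (v : Fin k → P → ℕ)

lemma fire_from_sim {M : P → ℕ} {M' : ExtPlace P → ℕ}
    (h : (N.extNet b v).Fire (extM0 M) M') :
    (∃ t, N.Pre t ≤ M ∧ M' = extM0 (M - N.Pre t + N.Post t)) ∨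
      (b ≤ M ∧ M' = linMk (M - b)) := by
  obtain ⟨t', hle, rfl⟩ := h
  match t' with
  | Sum.inl t =>
      left
      refine ⟨t, fun p => hle (Sum.inl p), ?_⟩
      funext x
      rcases x with p | (_ | _) <;> simp [extNet, extM0]
  | Sum.inr (Sum.inl i) =>
      exact absurd (hle (Sum.inr true)) (by simp [extNet, extM0])
  | Sum.inr (Sum.inr false) =>
      right
      refine ⟨fun p => hle (Sum.inl p), ?_⟩
      funext x
      rcases x with p | (_ | _) <;> simp [extNet, extM0, linMk]
  | Sum.inr (Sum.inr true) =>
      exact absurd (hle (Sum.inr true)) (by simp [extNet, extM0])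

lemma fire_from_lin {w : P → ℕ} {M' : ExtPlace P → ℕ}
    (h : (N.extNet b v).Fire (linMk w) M') :
    (∃ i, v i ≤ w ∧ M' = linMk (w - v i)) ∨ M' = deadMk w := by
  obtain ⟨t', hle, rfl⟩ := h
  match t' with
  | Sum.inl t =>
      exact absurd (hle (Sum.inr false)) (by simp [extNet, linMk])
  | Sum.inr (Sum.inl i) =>
      left
      refine ⟨i, fun p => hle (Sum.inl p), ?_⟩
      funext x
      rcases x with p | (_ | _) <;> simp [extNet, linMk]
  | Sum.inr (Sum.inr false) =>
      exact absurd (hle (Sum.inr false)) (by simp [extNet, linMk])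
  | Sum.inr (Sum.inr true) =>
      right
      funext x
      rcases x with p | (_ | _) <;> simp [extNet, linMk, deadMk]

lemma no_fire_from_dead {w : P → ℕ} {M' : ExtPlace P → ℕ}
    (h : (N.extNet b v).Fire (deadMk w) M') : False := by
  obtain ⟨t', hle, -⟩ := h
  match t' with
  | Sum.inl t => exact absurd (hle (Sum.inr false)) (by simp [extNet, deadMk])
  | Sum.inr (Sum.inl i) => exact absurd (hle (Sum.inr true)) (by simp [extNet, deadMk])
  | Sum.inr (Sum.inr false) => exact absurd (hle (Sum.inr false)) (by simp [extNet, deadMk])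
  | Sum.inr (Sum.inr true) => exact absurd (hle (Sum.inr true)) (by simp [extNet, deadMk])

/-- Combined analysis of runs of the extended net reaching the zero marking. -/
lemma key {M : ExtPlace P → ℕ}
    (h : (N.extNet b v).Reach M (fun _ => 0)) :
    (∀ w, M = linMk w → ∃ lam : Fin k → ℕ, w = ∑ i : Fin k, lam i • v i) ∧
    (∀ w, M = deadMk w → w = fun _ => 0) ∧
    (∀ M₀, M = extM0 M₀ →
      ∃ (M₂ : P → ℕ) (lam : Fin k → ℕ), N.Reach M₀ M₂ ∧ M₂ = b + ∑ i : Fin k, lam i • v i) := by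
  replace h : Relation.ReflTransGen (N.extNet b v).Fire M (fun _ => 0) := h
  induction h using Relation.ReflTransGen.head_induction_on with
  | refl =>
      refine ⟨?_, ?_, ?_⟩
      · intro w hw
        exact absurd (congrFun hw (Sum.inr true)) (by simp [linMk])
      · intro w hw
        funext p
        exact (congrFun hw (Sum.inl p)).symm
      · intro M₀ hM
        exact absurd (congrFun hM (Sum.inr false)) (by simp [extM0])
  | head hstep _ ih =>
      refine ⟨?_, ?_, ?_⟩
      · rintro w rfl
        rcases fire_from_lin N b v hstep with ⟨i, hle, rfl⟩ | rfl
        · obtain ⟨lam, hlam⟩ := ih.1 _ rfl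
          refine ⟨fun j => lam j + if j = i then 1 else 0, ?_⟩
          have hw : w = (w - v i) + v i := by
            funext p
            have := Pi.le_def.mp hle p
            simp only [Pi.sub_apply, Pi.add_apply]
            omega
          rw [hw, hlam]
          simp [add_smul, Finset.sum_add_distrib, ite_smul]
        · have h0 := ih.2.1 w rfl
          refine ⟨fun _ => 0, ?_⟩
          simp [h0]
          rfl
      · rintro w rfl
        exact absurd (no_fire_from_dead N b v hstep) (by simp)
      · rintro M₀ rfl
        rcases fire_from_sim N b v hstep with ⟨t, hle, rfl⟩ | ⟨hble, rfl⟩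
        · obtain ⟨M₂, lam, hr, heq⟩ := ih.2.2 _ rfl
          exact ⟨M₂, lam, hr.head ⟨t, hle, rfl⟩, heq⟩
        · obtain ⟨lam, hlam⟩ := ih.1 _ rfl
          refine ⟨M₀, lam, Relation.ReflTransGen.refl, ?_⟩
          funext p
          have h1 := congrFun hlam p
          have h2 := Pi.le_def.mp hble p
          simp only [Pi.sub_apply] at h1
          simp only [Pi.add_apply]
          omega

lemma sim_lift {M M' : P → ℕ} (h : N.Reach M M') :
    (N.extNet b v).Reach (extM0 M) (extM0 M') := by
  induction h with
  | refl => exact Relation.ReflTransGen.refl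
  | tail _ hbc ih =>
      obtain ⟨t, hle, rfl⟩ := hbc
      refine ih.tail ⟨Sum.inl t, ?_, ?_⟩
      · intro x
        rcases x with p | (_ | _) <;> simp [extNet, extM0]
        exact hle p
      · funext x
        rcases x with p | (_ | _) <;> simp [extNet, extM0]

lemma lin_consume (i : Fin k) : ∀ (n : ℕ) (w : P → ℕ),
    (N.extNet b v).Reach (linMk (n • v i + w)) (linMk w) := by
  intro n
  induction n with
  | zero => intro w; simp only [zero_smul, zero_add]; exact Relation.ReflTransGen.refl
  | succ n ihn =>
      intro w
      have hstep : (N.extNet b v).Fire (linMk ((n + 1) • v i + w)) (linMk (n • v i + w)) := by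
        refine ⟨Sum.inr (Sum.inl i), ?_, ?_⟩
        · intro x
          rcases x with p | (_ | _) <;> simp [extNet, linMk]
          nlinarith [v i p, w p]
        · funext x
          rcases x with p | (_ | _) <;> simp [extNet, linMk]
          ring_nf
          omega
      exact Relation.ReflTransGen.head hstep (ihn w)

lemma lin_sum (lam : Fin k → ℕ) : ∀ (s : Finset (Fin k)) (w : P → ℕ),
    (N.extNet b v).Reach (linMk ((∑ i ∈ s, lam i • v i) + w)) (linMk w) := by
  intro s
  induction s using Finset.induction_on with
  | empty => intro w; simp only [Finset.sum_empty, zero_add]; exact Relation.ReflTransGen.refl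
  | insert i s hni ih =>
      intro w
      rw [Finset.sum_insert hni, add_assoc]
      exact (lin_consume N b v i (lam i) _).trans (ih w)

end PetriAux

open PetriNet in
/-- For a Petri net `N`, a marking `M₀` and a linear set
`S = b + {λ₁·v₁ + … + λ_k·v_k}`, the reachability set of `M₀` in `N` is disjoint from `S`
iff the zero marking is not reachable from `M₀'` in the extended net `N'`. -/
theorem petri_reach_inter_linear_empty_iff {P T : Type} [Fintype P] [Fintype T]
    (N : PetriNet P T) (M0 : P → ℕ) {k : ℕ} (b : P → ℕ) (v : Fin k → P → ℕ) :
    {M : P → ℕ | N.Reach M0 M} ∩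
        {M : P → ℕ | ∃ lam : Fin k → ℕ, M = b + ∑ i : Fin k, lam i • v i} = ∅ ↔
      ¬ (N.extNet b v).Reach (extM0 M0) (fun _ => 0) := by
  constructor
  · intro hdisj hreach
    obtain ⟨M₂, lam, hr, heq⟩ := (PetriAux.key N b v hreach).2.2 M0 rfl
    have : M₂ ∈ ({M : P → ℕ | N.Reach M0 M} ∩
        {M : P → ℕ | ∃ lam : Fin k → ℕ, M = b + ∑ i : Fin k, lam i • v i}) :=
      ⟨hr, lam, heq⟩
    rw [hdisj] at this
    exact this
  · intro hnz
    rw [Set.eq_empty_iff_forall_notMem]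
    rintro M ⟨hM, lam, rfl⟩
    apply hnz
    have h1 := PetriAux.sim_lift N b v hM
    have hble : b ≤ b + ∑ i : Fin k, lam i • v i := le_add_of_nonneg_right (by positivity)
    have hstep : (N.extNet b v).Fire (extM0 (b + ∑ i : Fin k, lam i • v i))
        (PetriAux.linMk ((∑ i : Fin k, lam i • v i) + 0)) := by
      refine ⟨Sum.inr (Sum.inr false), ?_, ?_⟩
      · intro x
        rcases x with p | (_ | _)
        · simp only [PetriNet.extNet, PetriNet.extM0]; exact hble p
        · simp [PetriNet.extNet, PetriNet.extM0]
        · simp [PetriNet.extNet, PetriNet.extM0]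
      · funext x
        rcases x with p | (_ | _) <;> simp [PetriNet.extNet, PetriNet.extM0, PetriAux.linMk]
    have h2 := PetriAux.lin_sum N b v lam Finset.univ 0
    have hend : (N.extNet b v).Fire (PetriAux.linMk (0 : P → ℕ)) (fun _ => 0) := by
      refine ⟨Sum.inr (Sum.inr true), ?_, ?_⟩
      · intro x
        rcases x with p | (_ | _) <;> simp [PetriNet.extNet, PetriAux.linMk]
      · funext x
        rcases x with p | (_ | _) <;> simp [PetriNet.extNet, PetriAux.linMk]
    exact ((h1.tail hstep).trans h2).tail hend
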